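/- Let X and Y be real random variables with |X| ≤ B and |Y| ≤ B almost surely, and let Λ₁, Λ₂ be i.i.d. uniformly distributed on [−γ, γ] with γ ≥ B, independent of (X, Y). Then E[γ² · sign(X + Λ₁) · sign(Y + Λ₂)] = E[XY]. -/

import Mathlib

open MeasureTheory ProbabilityTheory
open scoped ENNReal

noncomputable section

/-- `sgn x = 1` if `x ≥ 0`, and `-1` otherwise. -/
def sgn (x : ℝ) : ℝ := if 0 ≤ x then 1 else -1

/-- Truncation at level `η`: `x ↦ sign(x) · min {|x|, η}`. -/
def trunc (η x : ℝ) : ℝ := sgn x * min |x| η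

/-- The law of the uniform distribution on the interval `[-γ, γ]`. -/
def unifLaw (γ : ℝ) : Measure ℝ :=
  (ENNReal.ofReal (2 * γ))⁻¹ • (volume.restrict (Set.Icc (-γ) γ))

/-- The law of the uniform distribution on the cube `[-γ, γ]^d`. -/
def unifCubeLaw (d : ℕ) (γ : ℝ) : Measure (Fin d → ℝ) :=
  Measure.pi fun _ : Fin d => unifLaw γ

/-- The sub-Gaussian (ψ₂) norm of a real random variable. -/
def subgNorm {Ω : Type*} [MeasurableSpace Ω] (μ : Measure Ω) (X : Ω → ℝ) : ℝ :=
  sInf {t : ℝ | 0 < t ∧ ∫ ω, Real.exp (X ω ^ 2 / t ^ 2) ∂μ ≤ 2}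

/-- The sub-Gaussian (ψ₂) norm of a random vector: `sup_{‖V‖₂ = 1} ‖VᵀX‖_{ψ₂}`. -/
def subgNormVec {Ω : Type*} [MeasurableSpace Ω] {d : ℕ} (μ : Measure Ω)
    (X : Ω → Fin d → ℝ) : ℝ :=
  sSup {a : ℝ | ∃ V : Fin d → ℝ, ∑ i, V i ^ 2 = 1 ∧
    a = subgNorm μ fun ω => ∑ i, V i * X ω i}

/-- The Euclidean (ℓ₂) norm on `Fin d → ℝ`. -/
def l2Norm {d : ℕ} (v : Fin d → ℝ) : ℝ := Real.sqrt (∑ i, v i ^ 2)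

/-- The ℓ₁ norm on `Fin d → ℝ`. -/
def l1Norm {d : ℕ} (v : Fin d → ℝ) : ℝ := ∑ i, |v i|

/-- The Frobenius norm of a `d × d` matrix. -/
def frobNorm {d : ℕ} (A : Fin d → Fin d → ℝ) : ℝ := Real.sqrt (∑ i, ∑ j, A i j ^ 2)

/-- The entrywise maximum norm of a `d × d` matrix. -/
def maxNorm {d : ℕ} (A : Fin d → Fin d → ℝ) : ℝ := ⨆ i, ⨆ j, |A i j|

/-- The ℓ₂ → ℓ₂ operator (spectral) norm of a `d × d` matrix. -/
def opNorm {d : ℕ} (A : Fin d → Fin d → ℝ) : ℝ :=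
  sSup {a : ℝ | ∃ v : Fin d → ℝ, ∑ i, v i ^ 2 = 1 ∧
    a = Real.sqrt (∑ i, (∑ j, A i j * v j) ^ 2)}

/-- The singular values of a `d × d` real matrix (in some enumeration):
the square roots of the eigenvalues of `AᵀA`. -/
def singVals {d : ℕ} (A : Fin d → Fin d → ℝ) : Fin d → ℝ := fun i =>
  Real.sqrt ((Matrix.isHermitian_iff_isSymm.mpr (Matrix.isSymm_transpose_mul_self (Matrix.of A))).eigenvalues i)

/-- The nuclear norm: the sum of the singular values. -/
def nucNorm {d : ℕ} (A : Fin d → Fin d → ℝ) : ℝ := ∑ i, singVals A i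

/-- `|x| ^ q`, with the convention that it is `0` when `x = 0`
(so that `q = 0` counts nonzero entries). -/
def powAbs (q x : ℝ) : ℝ := if x = 0 then 0 else |x| ^ q

/-- Column-wise vectorization of a `d × d` matrix (indexed by pairs). -/
def vecM {d : ℕ} (A : Fin d → Fin d → ℝ) : Fin d × Fin d → ℝ := fun p => A p.1 p.2

/-- The standard basis matrix `eᵢ eⱼᵀ`. -/
def basisM {d : ℕ} (i j : Fin d) : Fin d → Fin d → ℝ := fun a b =>
  if a = i ∧ b = j then 1 else 0

/-- The law of the uniform distribution on `{eᵢ eⱼᵀ : i, j ∈ [d]}`. -/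
def mcLaw (d : ℕ) : Measure (Fin d → Fin d → ℝ) :=
  ((d : ℝ≥0∞) ^ 2)⁻¹ • ∑ i : Fin d, ∑ j : Fin d, Measure.dirac (basisM i j)

/-- The trace inner product `⟨A, B⟩ = Tr(AᵀB) = Σᵢⱼ Aᵢⱼ Bᵢⱼ`. -/
def minner {d : ℕ} (A B : Fin d → Fin d → ℝ) : ℝ := ∑ i, ∑ j, A i j * B i j

lemma sgn_meas : Measurable sgn := by
  unfold sgn
  exact Measurable.ite measurableSet_Ici measurable_const measurable_const

lemma abs_sgn (x : ℝ) : |sgn x| = 1 := by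
  unfold sgn; split <;> simp

lemma unifLaw_prob {γ : ℝ} (hγ : 0 < γ) : IsProbabilityMeasure (unifLaw γ) := by
  constructor
  rw [unifLaw, Measure.smul_apply, Measure.restrict_apply MeasurableSet.univ,
    Set.univ_inter, Real.volume_Icc, smul_eq_mul]
  rw [show γ - -γ = 2 * γ by ring]
  exact ENNReal.inv_mul_cancel (by simp [hγ]) ENNReal.ofReal_ne_top

lemma integral_sgn_unif {γ x : ℝ} (hγ : 0 < γ) (hx : |x| ≤ γ) :
    ∫ l, sgn (x + l) ∂(unifLaw γ) = x / γ := by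
  obtain ⟨hx1, hx2⟩ := abs_le.mp hx
  have hpt : ∀ l, sgn (x + l) = Set.indicator (Set.Ici (-x)) (fun _ => (2:ℝ)) l - 1 := by
    intro l; by_cases h : -x ≤ l
    · rw [Set.indicator_of_mem (Set.mem_Ici.mpr h)]; simp [sgn, show 0 ≤ x + l by linarith]; norm_num
    · push_neg at h
      rw [Set.indicator_of_notMem (by simpa using not_le.mpr h)]
      simp [sgn, show ¬ (0 ≤ x + l) by push_neg; linarith]
  simp_rw [hpt]
  rw [unifLaw, integral_smul_measure]
  have hint1 : Integrable (Set.indicator (Set.Ici (-x)) (fun _ => (2:ℝ)))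
      (volume.restrict (Set.Icc (-γ) γ)) := by
    apply Integrable.indicator _ measurableSet_Ici
    exact integrable_const 2
  rw [integral_sub hint1 (integrable_const 1)]
  rw [integral_indicator measurableSet_Ici, setIntegral_const, setIntegral_const]
  rw [measureReal_restrict_apply measurableSet_Ici]
  have : Set.Ici (-x) ∩ Set.Icc (-γ) γ = Set.Icc (-x) γ := by
    ext t; simp only [Set.mem_inter_iff, Set.mem_Ici, Set.mem_Icc]
    constructor
    · rintro ⟨h1, h2, h3⟩; exact ⟨h1, h3⟩
    · rintro ⟨h1, h2⟩; exact ⟨h1, by linarith, h2⟩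
  rw [this, Real.volume_real_Icc_of_le (by linarith), Real.volume_real_Icc_of_le (by linarith)]
  rw [ENNReal.toReal_inv, ENNReal.toReal_ofReal (by linarith), smul_eq_mul, smul_eq_mul, smul_eq_mul]
  field_simp
  ring

theorem statement_1
    {Ω : Type*} [MeasurableSpace Ω] (μ : Measure Ω) [IsProbabilityMeasure μ]
    (X Y Λ₁ Λ₂ : Ω → ℝ) (B γ : ℝ)
    (hX : Measurable X) (hY : Measurable Y) (hΛ₁ : Measurable Λ₁) (hΛ₂ : Measurable Λ₂)
    (hXb : ∀ᵐ ω ∂μ, |X ω| ≤ B) (hYb : ∀ᵐ ω ∂μ, |Y ω| ≤ B)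
    (hγpos : 0 < γ) (hBγ : B ≤ γ)
    (hlaw₁ : Measure.map Λ₁ μ = unifLaw γ) (hlaw₂ : Measure.map Λ₂ μ = unifLaw γ)
    (hindepΛ : IndepFun Λ₁ Λ₂ μ)
    (hindep : IndepFun (fun ω => (X ω, Y ω)) (fun ω => (Λ₁ ω, Λ₂ ω)) μ) :
    ∫ ω, γ ^ 2 * sgn (X ω + Λ₁ ω) * sgn (Y ω + Λ₂ ω) ∂μ = ∫ ω, X ω * Y ω ∂μ := by
  haveI hP : IsProbabilityMeasure (unifLaw γ) := unifLaw_prob hγpos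
  set Z : Ω → ℝ × ℝ := fun ω => (X ω, Y ω) with hZdef
  set W : Ω → ℝ × ℝ := fun ω => (Λ₁ ω, Λ₂ ω) with hWdef
  have hZ : Measurable Z := hX.prodMk hY
  have hW : Measurable W := hΛ₁.prodMk hΛ₂
  have hmapW : Measure.map W μ = (unifLaw γ).prod (unifLaw γ) := by
    rw [(indepFun_iff_map_prod_eq_prod_map_map hΛ₁.aemeasurable hΛ₂.aemeasurable).mp hindepΛ,
      hlaw₁, hlaw₂]
  have hmapZW : Measure.map (fun ω => (Z ω, W ω)) μ
      = (Measure.map Z μ).prod (Measure.map W μ) :=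
    (indepFun_iff_map_prod_eq_prod_map_map hZ.aemeasurable hW.aemeasurable).mp hindep
  haveI : IsProbabilityMeasure (Measure.map Z μ) := Measure.isProbabilityMeasure_map hZ.aemeasurable
  haveI : IsProbabilityMeasure (Measure.map W μ) := Measure.isProbabilityMeasure_map hW.aemeasurable
  set F : (ℝ × ℝ) × (ℝ × ℝ) → ℝ :=
    fun p => γ ^ 2 * sgn (p.1.1 + p.2.1) * sgn (p.1.2 + p.2.2) with hF
  have hFmeas : Measurable F := by
    apply Measurable.mul
    · exact (measurable_const.mul
        (sgn_meas.comp (measurable_fst.fst.add measurable_snd.fst)))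
    · exact sgn_meas.comp (measurable_fst.snd.add measurable_snd.snd)
  have step1 : ∫ ω, γ ^ 2 * sgn (X ω + Λ₁ ω) * sgn (Y ω + Λ₂ ω) ∂μ
      = ∫ p, F p ∂(Measure.map (fun ω => (Z ω, W ω)) μ) :=
    (integral_map (hZ.prodMk hW).aemeasurable hFmeas.aestronglyMeasurable).symm
  rw [step1, hmapZW]
  have hFint : Integrable F ((Measure.map Z μ).prod (Measure.map W μ)) := by
    apply (integrable_const (γ ^ 2)).mono' hFmeas.aestronglyMeasurable
    filter_upwards with p
    rw [hF]
    simp only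
    rw [Real.norm_eq_abs, abs_mul, abs_mul, abs_sgn, abs_sgn, abs_of_nonneg (sq_nonneg γ)]
    simp
  rw [integral_prod F hFint, hmapW]
  have hinner : ∀ z : ℝ × ℝ, |z.1| ≤ γ → |z.2| ≤ γ →
      ∫ w : ℝ × ℝ, F (z, w) ∂((unifLaw γ).prod (unifLaw γ)) = z.1 * z.2 := by
    intro z h1 h2
    have heq : ∀ w : ℝ × ℝ, F (z, w) = (γ * sgn (z.1 + w.1)) * (γ * sgn (z.2 + w.2)) := by
      intro w; rw [hF]; ring
    simp_rw [heq]
    rw [integral_prod_mul (fun l => γ * sgn (z.1 + l)) (fun l => γ * sgn (z.2 + l)),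
      integral_const_mul, integral_const_mul, integral_sgn_unif hγpos h1,
      integral_sgn_unif hγpos h2]
    field_simp
  have hae : ∀ᵐ z ∂(Measure.map Z μ), |z.1| ≤ γ ∧ |z.2| ≤ γ := by
    rw [ae_map_iff hZ.aemeasurable]
    · filter_upwards [hXb, hYb] with ω h1 h2
      exact ⟨h1.trans hBγ, h2.trans hBγ⟩
    · exact (measurableSet_le measurable_fst.abs measurable_const).inter
        (measurableSet_le measurable_snd.abs measurable_const)
  rw [integral_congr_ae (hae.mono fun z hz => hinner z hz.1 hz.2)]
  exact integral_map hZ.aemeasurable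
    (measurable_fst.mul measurable_snd).aestronglyMeasurable
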